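/- Let n ≥ 4 be an integer. The function δ ↦ ∏_{i=2}^{n−2} (δ_i + δ_{i+1})^{−1} is Lebesgue-integrable over the open simplex {(δ_2, …, δ_{n−2}) ∈ (0,∞)^{n−3} : δ_2 + ⋯ + δ_{n−2} < 1}, where one sets δ_{n−1} := 1 − (δ_2 + ⋯ + δ_{n−2}). In particular, the disc volume V_disc(n) := ∫ over this simplex of ∏_{i=2}^{n−2}(δ_i + δ_{i+1})^{−1} dδ_2⋯dδ_{n−2} is finite. -/

import Mathlib

open MeasureTheory

/-- Extension of the disc simplex coordinates: for `2 ≤ i ≤ n-2` this is `δ_i`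
(the `(i-2)`-th component of `δ`), and `δ_{n-1} := 1 - (δ_2 + ⋯ + δ_{n-2})`. -/
noncomputable def discδ (n : ℕ) (δ : Fin (n - 3) → ℝ) (i : ℕ) : ℝ :=
  if h : n - 3 = 0 then 0
  else if i = n - 1 then 1 - ∑ j, δ j
  else δ ⟨(i - 2) % (n - 3), Nat.mod_lt _ (Nat.pos_of_ne_zero h)⟩

namespace Stmt13Aux

open Set
open scoped ENNReal

lemma rpow_neg_anti {a b c : ℝ} (ha : 0 < a) (hab : a ≤ b) (hc : 0 ≤ c) :
    b ^ (-c) ≤ a ^ (-c) := by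
  rw [Real.rpow_neg (ha.trans_le hab).le, Real.rpow_neg ha.le]
  exact inv_anti₀ (Real.rpow_pos_of_pos ha c) (Real.rpow_le_rpow ha.le hab hc)

lemma amgm_inv {x y s : ℝ} (hx : 0 < x) (hy : 0 < y) (hs0 : 0 ≤ s) (hs1 : s ≤ 1) :
    (x + y)⁻¹ ≤ x ^ (-s) * y ^ (-(1 - s)) := by
  have h1 : x ^ s * y ^ (1 - s) ≤ s * x + (1 - s) * y :=
    Real.geom_mean_le_arith_mean2_weighted hs0 (by linarith) hx.le hy.le (by ring)
  have h2 : s * x + (1 - s) * y ≤ x + y := by nlinarith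
  have h3 : 0 < x ^ s * y ^ (1 - s) :=
    mul_pos (Real.rpow_pos_of_pos hx _) (Real.rpow_pos_of_pos hy _)
  calc (x + y)⁻¹ ≤ (x ^ s * y ^ (1 - s))⁻¹ := inv_anti₀ h3 (h1.trans h2)
    _ = x ^ (-s) * y ^ (-(1 - s)) := by
        rw [Real.rpow_neg hx.le, Real.rpow_neg hy.le, mul_inv]

lemma lintegral_rpow_Ioo {p : ℝ} (hp1 : p < 1) {T : ℝ} (hT : 0 < T) :
    ∫⁻ x in Ioo (0:ℝ) T, ENNReal.ofReal (x ^ (-p)) ≤ ENNReal.ofReal (T ^ (1 - p) / (1 - p)) := by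
  have hexp : (-1 : ℝ) < -p := by linarith
  have hint : IntegrableOn (fun x : ℝ => x ^ (-p)) (Ioo 0 T) := by
    have h := (intervalIntegral.intervalIntegrable_rpow' hexp (a := 0) (b := T))
    rw [intervalIntegrable_iff_integrableOn_Ioc_of_le hT.le] at h
    exact h.mono_set Ioo_subset_Ioc_self
  have hnn : 0 ≤ᵐ[volume.restrict (Ioo (0:ℝ) T)] fun x : ℝ => x ^ (-p) := by
    filter_upwards [ae_restrict_mem measurableSet_Ioo] with x hx
    exact Real.rpow_nonneg hx.1.le _
  rw [← ofReal_integral_eq_lintegral_ofReal hint hnn]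
  apply ENNReal.ofReal_le_ofReal
  have h2 : ∫ x in Ioo (0:ℝ) T, x ^ (-p) = ∫ x in (0:ℝ)..T, x ^ (-p) := by
    rw [intervalIntegral.integral_of_le hT.le, integral_Ioc_eq_integral_Ioo]
  rw [h2, integral_rpow (Or.inl hexp), Real.zero_rpow (by linarith : -p + 1 ≠ 0)]
  have h3 : -p + 1 = 1 - p := by ring
  rw [h3, sub_zero]

lemma lintegral_rpow_sub_Ioo {q : ℝ} (hq : q < 1) {L : ℝ} (hL : 0 < L) :
    ∫⁻ x in Ioo (L/2) L, ENNReal.ofReal ((L - x) ^ (-q)) ≤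
      ENNReal.ofReal (L ^ (1 - q) / (1 - q)) := by
  have hexp : (-1:ℝ) < -q := by linarith
  have hhalf : 0 < L / 2 := by linarith
  have hint : IntegrableOn (fun x : ℝ => (L - x) ^ (-q)) (Ioo (L/2) L) := by
    have h0 : IntervalIntegrable (fun x : ℝ => x ^ (-q)) volume 0 (L/2) :=
      intervalIntegral.intervalIntegrable_rpow' hexp
    have h1 := h0.comp_sub_left L
    rw [sub_zero, (by ring : L - L/2 = L/2), intervalIntegrable_iff] at h1
    rw [Set.uIoc_comm, Set.uIoc_of_le (by linarith : L/2 ≤ L)] at h1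
    exact h1.mono_set Ioo_subset_Ioc_self
  have hnn : 0 ≤ᵐ[volume.restrict (Ioo (L/2) L)] fun x : ℝ => (L - x) ^ (-q) := by
    filter_upwards [ae_restrict_mem measurableSet_Ioo] with x hx
    exact Real.rpow_nonneg (by linarith [hx.2]) _
  rw [← ofReal_integral_eq_lintegral_ofReal hint hnn]
  apply ENNReal.ofReal_le_ofReal
  have h2 : ∫ x in Ioo (L/2) L, (L - x) ^ (-q) = ∫ x in (L/2)..L, (L - x) ^ (-q) := by
    rw [intervalIntegral.integral_of_le (by linarith), integral_Ioc_eq_integral_Ioo]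
  rw [h2, intervalIntegral.integral_comp_sub_left (fun x => x ^ (-q)) L, sub_self,
    (by ring : L - L/2 = L/2), integral_rpow (Or.inl hexp),
    Real.zero_rpow (by linarith : -q + 1 ≠ 0)]
  have h3 : -q + 1 = 1 - q := by ring
  rw [h3, sub_zero]
  rw [div_le_div_iff_of_pos_right (by linarith : (0:ℝ) < 1 - q)]
  exact Real.rpow_le_rpow hhalf.le (by linarith) (by linarith)


lemma beta_bound {p q : ℝ} (hp0 : 0 ≤ p) (hp1 : p < 1) (hq : q < 1) {L : ℝ} (hL : 0 < L) :
    ∫⁻ x in Ioo (0:ℝ) L, ENNReal.ofReal (x ^ (-p) * (L - x) ^ (-q)) ≤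
      ENNReal.ofReal ((2 ^ |q| / (1 - p) + 2 / (1 - q)) * L ^ (1 - p - q)) := by
  have hhalf : 0 < L / 2 := by linarith
  have h1p : (0:ℝ) < 1 - p := by linarith
  have h1q : (0:ℝ) < 1 - q := by linarith
  have h2q : (0:ℝ) ≤ 2 ^ |q| := Real.rpow_nonneg (by norm_num) _
  have hq2 : (0:ℝ) ≤ 2 ^ |q| * L ^ (-q) := mul_nonneg h2q (Real.rpow_nonneg hL.le _)
  have hLL1 : L ^ (1 - p) * L ^ (-q) = L ^ (1 - p - q) := by
    rw [← Real.rpow_add hL]; ring_nf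
  have hLL2 : L ^ (-p) * L ^ (1 - q) = L ^ (1 - p - q) := by
    rw [← Real.rpow_add hL]; ring_nf
  have hsplit : Ioo (0:ℝ) (L/2) ∪ Ico (L/2) L = Ioo 0 L :=
    Set.Ioo_union_Ico_eq_Ioo hhalf (by linarith)
  rw [← hsplit, lintegral_union measurableSet_Ico (Set.Ico_disjoint_Ico_same.mono_left Set.Ioo_subset_Ico_self)]
  have piece1 : ∫⁻ x in Ioo (0:ℝ) (L/2), ENNReal.ofReal (x ^ (-p) * (L - x) ^ (-q)) ≤
      ENNReal.ofReal ((2 ^ |q| / (1 - p)) * L ^ (1 - p - q)) := by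
    have step : ∀ x ∈ Ioo (0:ℝ) (L/2), ENNReal.ofReal (x ^ (-p) * (L - x) ^ (-q)) ≤
        ENNReal.ofReal (x ^ (-p) * (2 ^ |q| * L ^ (-q))) := by
      intro x hx
      apply ENNReal.ofReal_le_ofReal
      apply mul_le_mul_of_nonneg_left _ (Real.rpow_nonneg hx.1.le _)
      rcases le_or_gt 0 q with h | h
      · calc (L - x) ^ (-q) ≤ (L/2) ^ (-q) := rpow_neg_anti hhalf (by linarith [hx.2]) h
          _ = (2:ℝ) ^ q * L ^ (-q) := by
              rw [Real.div_rpow hL.le (by norm_num), Real.rpow_neg (by norm_num : (0:ℝ) ≤ 2),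
                div_eq_mul_inv, inv_inv, mul_comm]
          _ ≤ 2 ^ |q| * L ^ (-q) := by
              apply mul_le_mul_of_nonneg_right _ (Real.rpow_nonneg hL.le _)
              exact Real.rpow_le_rpow_of_exponent_le (by norm_num) (le_abs_self q)
      · calc (L - x) ^ (-q) ≤ L ^ (-q) :=
              Real.rpow_le_rpow (by linarith [hx.2] : (0:ℝ) ≤ L - x)
                (by linarith [hx.1] : L - x ≤ L) (by linarith : (0:ℝ) ≤ -q)
          _ ≤ 2 ^ |q| * L ^ (-q) := by
              apply le_mul_of_one_le_left (Real.rpow_nonneg hL.le _)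
              calc (1:ℝ) = 2 ^ (0:ℝ) := (Real.rpow_zero 2).symm
                _ ≤ 2 ^ |q| := Real.rpow_le_rpow_of_exponent_le (by norm_num) (abs_nonneg q)
    calc ∫⁻ x in Ioo (0:ℝ) (L/2), ENNReal.ofReal (x ^ (-p) * (L - x) ^ (-q))
        ≤ ∫⁻ x in Ioo (0:ℝ) (L/2), ENNReal.ofReal (x ^ (-p) * (2 ^ |q| * L ^ (-q))) := by
          apply setLIntegral_mono _ step
          fun_prop
      _ = (∫⁻ x in Ioo (0:ℝ) (L/2), ENNReal.ofReal (x ^ (-p))) * ENNReal.ofReal (2 ^ |q| * L ^ (-q)) := by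
          simp_rw [ENNReal.ofReal_mul' hq2]
          exact lintegral_mul_const' _ _ ENNReal.ofReal_ne_top
      _ ≤ ENNReal.ofReal ((L/2) ^ (1 - p) / (1 - p)) * ENNReal.ofReal (2 ^ |q| * L ^ (-q)) :=
          mul_le_mul_left (lintegral_rpow_Ioo hp1 hhalf) _
      _ = ENNReal.ofReal ((L/2) ^ (1 - p) / (1 - p) * (2 ^ |q| * L ^ (-q))) := by
          rw [← ENNReal.ofReal_mul (by positivity)]
      _ ≤ ENNReal.ofReal ((2 ^ |q| / (1 - p)) * L ^ (1 - p - q)) := by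
          apply ENNReal.ofReal_le_ofReal
          have hmono : (L/2) ^ (1-p) ≤ L ^ (1-p) :=
            Real.rpow_le_rpow hhalf.le (by linarith) (by linarith)
          calc (L/2) ^ (1 - p) / (1 - p) * (2 ^ |q| * L ^ (-q))
              ≤ L ^ (1 - p) / (1 - p) * (2 ^ |q| * L ^ (-q)) := by
                apply mul_le_mul_of_nonneg_right _ hq2
                exact (div_le_div_iff_of_pos_right h1p).mpr hmono
            _ = (2 ^ |q| / (1 - p)) * L ^ (1 - p - q) := by
                rw [← hLL1]; ring
  have piece2 : ∫⁻ x in Ico (L/2) L, ENNReal.ofReal (x ^ (-p) * (L - x) ^ (-q)) ≤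
      ENNReal.ofReal ((2 / (1 - q)) * L ^ (1 - p - q)) := by
    have h2L : (0:ℝ) ≤ 2 * L ^ (-p) := mul_nonneg (by norm_num) (Real.rpow_nonneg hL.le _)
    have step : ∀ x ∈ Ico (L/2) L, ENNReal.ofReal (x ^ (-p) * (L - x) ^ (-q)) ≤
        ENNReal.ofReal ((2 * L ^ (-p)) * (L - x) ^ (-q)) := by
      intro x hx
      apply ENNReal.ofReal_le_ofReal
      apply mul_le_mul_of_nonneg_right _ (Real.rpow_nonneg (by linarith [hx.2] : (0:ℝ) ≤ L - x) _)
      calc x ^ (-p) ≤ (L/2) ^ (-p) := rpow_neg_anti hhalf hx.1 hp0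
        _ = (2:ℝ) ^ p * L ^ (-p) := by
            rw [Real.div_rpow hL.le (by norm_num), Real.rpow_neg (by norm_num : (0:ℝ) ≤ 2),
              div_eq_mul_inv, inv_inv, mul_comm]
        _ ≤ 2 * L ^ (-p) := by
            apply mul_le_mul_of_nonneg_right _ (Real.rpow_nonneg hL.le _)
            calc (2:ℝ) ^ p ≤ 2 ^ (1:ℝ) :=
                Real.rpow_le_rpow_of_exponent_le (by norm_num) (by linarith)
              _ = 2 := Real.rpow_one 2
    calc ∫⁻ x in Ico (L/2) L, ENNReal.ofReal (x ^ (-p) * (L - x) ^ (-q))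
        ≤ ∫⁻ x in Ico (L/2) L, ENNReal.ofReal ((2 * L ^ (-p)) * (L - x) ^ (-q)) := by
          apply setLIntegral_mono _ step
          fun_prop
      _ = ENNReal.ofReal (2 * L ^ (-p)) * ∫⁻ x in Ico (L/2) L, ENNReal.ofReal ((L - x) ^ (-q)) := by
          simp_rw [ENNReal.ofReal_mul h2L]
          exact lintegral_const_mul' _ _ ENNReal.ofReal_ne_top
      _ = ENNReal.ofReal (2 * L ^ (-p)) * ∫⁻ x in Ioo (L/2) L, ENNReal.ofReal ((L - x) ^ (-q)) := by
          rw [setLIntegral_congr (Ioo_ae_eq_Ico (a := L/2) (b := L))]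
      _ ≤ ENNReal.ofReal (2 * L ^ (-p)) * ENNReal.ofReal (L ^ (1 - q) / (1 - q)) :=
          mul_le_mul_right (lintegral_rpow_sub_Ioo hq hL) _
      _ = ENNReal.ofReal ((2 / (1 - q)) * L ^ (1 - p - q)) := by
          rw [← ENNReal.ofReal_mul h2L]
          congr 1
          rw [← hLL2]; ring
  calc (∫⁻ x in Ioo (0:ℝ) (L/2), ENNReal.ofReal (x ^ (-p) * (L - x) ^ (-q))) +
        ∫⁻ x in Ico (L/2) L, ENNReal.ofReal (x ^ (-p) * (L - x) ^ (-q))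
      ≤ ENNReal.ofReal ((2 ^ |q| / (1 - p)) * L ^ (1 - p - q)) +
        ENNReal.ofReal ((2 / (1 - q)) * L ^ (1 - p - q)) := add_le_add piece1 piece2
    _ = ENNReal.ofReal ((2 ^ |q| / (1 - p) + 2 / (1 - q)) * L ^ (1 - p - q)) := by
        rw [← ENNReal.ofReal_add (by positivity) (by positivity)]
        congr 1; ring


def simplexSet (m : ℕ) : Set (Fin m → ℝ) := {δ | (∀ i, 0 < δ i) ∧ ∑ i, δ i < 1}

lemma measurableSet_simplexSet (m : ℕ) : MeasurableSet (simplexSet m) := by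
  have : simplexSet m = (⋂ i, {δ : Fin m → ℝ | 0 < δ i}) ∩ {δ : Fin m → ℝ | ∑ i, δ i < 1} := by
    ext δ; simp [simplexSet]
  rw [this]
  apply MeasurableSet.inter
  · exact MeasurableSet.iInter fun i => measurableSet_lt measurable_const (measurable_pi_apply i)
  · exact measurableSet_lt (Finset.measurable_sum _ fun i _ => measurable_pi_apply i)
      measurable_const

lemma measurable_integrand (m : ℕ) (p : Fin m → ℝ) (q : ℝ) :
    Measurable (fun δ : Fin m → ℝ =>
      ENNReal.ofReal ((∏ k, δ k ^ (-(p k))) * (1 - ∑ k, δ k) ^ (-q))) := by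
  fun_prop

lemma dirichlet : ∀ (m : ℕ) (p : Fin m → ℝ) (q : ℝ), (∀ k, 0 ≤ p k) → (∀ k, p k < 1) → q < 1 →
    (∫⁻ δ in simplexSet m,
      ENNReal.ofReal ((∏ k, δ k ^ (-(p k))) * (1 - ∑ k, δ k) ^ (-q))) < ⊤ := by
  intro m
  induction m with
  | zero =>
    intro p q _ _ hq
    have h1 : ∀ δ : Fin 0 → ℝ,
        ENNReal.ofReal ((∏ k, δ k ^ (-(p k))) * (1 - ∑ k, δ k) ^ (-q)) = 1 := by
      intro δ; simp
    simp_rw [h1]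
    rw [setLIntegral_one]
    refine lt_of_le_of_lt (measure_mono (Set.subset_univ _)) ?_
    have h2 : (volume : Measure (Fin 0 → ℝ)) Set.univ = 1 := by
      rw [MeasureTheory.volume_pi, Measure.pi_univ]; simp
    rw [h2]; exact ENNReal.one_lt_top
  | succ m IH =>
    intro p q hp0 hp1 hq
    have hC0 : (0:ℝ) ≤ 2 ^ |q| / (1 - p 0) + 2 / (1 - q) := by
      have h1 := hp1 0
      have h2 : (0:ℝ) ≤ 2 ^ |q| := Real.rpow_nonneg (by norm_num) _
      exact add_nonneg (div_nonneg h2 (by linarith)) (div_nonneg (by norm_num) (by linarith))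
    set C : ℝ := 2 ^ |q| / (1 - p 0) + 2 / (1 - q) with hC
    have hq'1 : p 0 + q - 1 < 1 := by have := hp1 0; linarith
    set f : (Fin (m+1) → ℝ) → ℝ≥0∞ := fun δ =>
      ENNReal.ofReal ((∏ k, δ k ^ (-(p k))) * (1 - ∑ k, δ k) ^ (-q)) with hf
    have hfm : Measurable f := measurable_integrand _ p q
    set G : (Fin m → ℝ) → ℝ≥0∞ := (simplexSet m).indicator (fun y =>
      ENNReal.ofReal C *
        ENNReal.ofReal ((∏ k, y k ^ (-(p k.succ))) * (1 - ∑ k, y k) ^ (-(p 0 + q - 1)))) with hG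
    -- membership characterization
    have hmem : ∀ (x : ℝ) (y : Fin m → ℝ),
        Fin.cons x y ∈ simplexSet (m+1) ↔ ((0 < x ∧ ∀ k, 0 < y k) ∧ x + ∑ k, y k < 1) := by
      intro x y
      constructor
      · rintro ⟨hpos, hsum⟩
        rw [Fin.sum_cons] at hsum
        exact ⟨⟨by simpa using hpos 0, fun k => by simpa using hpos k.succ⟩, hsum⟩
      · rintro ⟨⟨hx, hy⟩, hsum⟩
        refine ⟨?_, by rwa [Fin.sum_cons]⟩
        intro i
        refine Fin.cases ?_ ?_ i
        · simpa using hx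
        · intro k; simpa using hy k
    have inner_bound : ∀ y : Fin m → ℝ,
        (∫⁻ x : ℝ, (simplexSet (m+1)).indicator f (Fin.cons x y)) ≤ G y := by
      intro y
      by_cases hy : y ∈ simplexSet m
      · have hL : 0 < 1 - ∑ k, y k := by linarith [hy.2]
        set L : ℝ := 1 - ∑ k, y k with hLdef
        set P : ℝ := ∏ k, y k ^ (-(p k.succ)) with hP
        have hPnn : 0 ≤ P := Finset.prod_nonneg fun k _ => Real.rpow_nonneg (hy.1 k).le _
        have key : ∀ x : ℝ, (simplexSet (m+1)).indicator f (Fin.cons x y) =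
            (Set.indicator (Set.Ioo 0 L)
              (fun x => ENNReal.ofReal (P * (x ^ (-(p 0)) * (L - x) ^ (-q)))) x) := by
          intro x
          by_cases hx : x ∈ Set.Ioo (0:ℝ) L
          · rw [Set.indicator_of_mem hx, Set.indicator_of_mem
              ((hmem x y).mpr ⟨⟨hx.1, hy.1⟩, by have := hx.2; rw [hLdef] at this; linarith⟩)]
            have hprod : (∏ k, (Fin.cons x y : Fin (m+1) → ℝ) k ^ (-(p k))) =
                x ^ (-(p 0)) * ∏ k : Fin m, y k ^ (-(p k.succ)) := by
              rw [Fin.prod_univ_succ]; simp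
            have hsum2 : (1 : ℝ) - ∑ k, (Fin.cons x y : Fin (m+1) → ℝ) k = L - x := by
              rw [Fin.sum_cons, hLdef]; ring
            rw [hf]
            simp only [hprod, hsum2]
            congr 1; rw [hP]; ring
          · rw [Set.indicator_of_notMem hx, Set.indicator_of_notMem]
            intro hmem'
            obtain ⟨⟨hx1, _⟩, hsum'⟩ := (hmem x y).mp hmem'
            exact hx ⟨hx1, by rw [hLdef]; linarith⟩
        simp_rw [key]
        rw [lintegral_indicator measurableSet_Ioo]
        have hfac : ∀ x : ℝ, ENNReal.ofReal (P * (x ^ (-(p 0)) * (L - x) ^ (-q))) =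
            ENNReal.ofReal P * ENNReal.ofReal (x ^ (-(p 0)) * (L - x) ^ (-q)) :=
          fun x => ENNReal.ofReal_mul hPnn
        simp_rw [hfac]
        rw [lintegral_const_mul' _ _ ENNReal.ofReal_ne_top]
        have hbeta := beta_bound (hp0 0) (hp1 0) hq hL
        calc ENNReal.ofReal P * ∫⁻ x in Set.Ioo (0:ℝ) L, ENNReal.ofReal (x ^ (-(p 0)) * (L - x) ^ (-q))
            ≤ ENNReal.ofReal P * ENNReal.ofReal (C * L ^ (1 - p 0 - q)) :=
              mul_le_mul_right hbeta _
          _ = G y := by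
              rw [hG]
              rw [Set.indicator_of_mem hy]
              rw [← ENNReal.ofReal_mul hPnn, ← ENNReal.ofReal_mul hC0]
              have hexp : L ^ (1 - p 0 - q) = L ^ (-(p 0 + q - 1)) := by ring_nf
              rw [← hLdef, ← hP, hexp]
              congr 1
              ring
      · have hzero : ∀ x : ℝ, (simplexSet (m+1)).indicator f (Fin.cons x y) = 0 := by
          intro x
          apply Set.indicator_of_notMem
          intro hmem'
          obtain ⟨⟨hx, hypos⟩, hsum'⟩ := (hmem x y).mp hmem'
          exact hy ⟨hypos, by linarith⟩
        simp_rw [hzero]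
        rw [lintegral_zero]
        rw [hG]
        exact zero_le
    -- G integral finite
    have hGfin : (∫⁻ y : Fin m → ℝ, G y) < ⊤ := by
      rw [hG, lintegral_indicator (measurableSet_simplexSet m),
        lintegral_const_mul' _ _ ENNReal.ofReal_ne_top]
      exact ENNReal.mul_lt_top ENNReal.ofReal_lt_top
        (IH (fun k => p k.succ) (p 0 + q - 1) (fun k => hp0 k.succ) (fun k => hp1 k.succ) hq'1)
    -- now the change of variables
    rw [← lintegral_indicator (measurableSet_simplexSet (m+1))]
    have hind : Measurable ((simplexSet (m+1)).indicator f) :=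
      hfm.indicator (measurableSet_simplexSet (m+1))
    have mp := (measurePreserving_piFinSuccAbove (fun _ : Fin (m+1) => (volume : Measure ℝ)) 0).symm
    rw [MeasureTheory.volume_pi, ← mp.lintegral_comp hind]
    rw [lintegral_prod_symm' (fun z : ℝ × (Fin m → ℝ) =>
      (simplexSet (m+1)).indicator f
        ((MeasurableEquiv.piFinSuccAbove (fun _ : Fin (m+1) => ℝ) 0).symm z))
      (hind.comp (MeasurableEquiv.measurable _))]
    have hesymm : ∀ (x : ℝ) (y : Fin m → ℝ),
        (MeasurableEquiv.piFinSuccAbove (fun _ : Fin (m+1) => ℝ) 0).symm (x, y) = Fin.cons x y := by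
      intro x y
      show (Fin.insertNthEquiv (fun _ => ℝ) 0) (x, y) = Fin.cons x y
      simp [Fin.insertNthEquiv, Fin.insertNth_zero']
    calc ∫⁻ y : Fin m → ℝ, (∫⁻ x : ℝ,
          (simplexSet (m+1)).indicator f
            ((MeasurableEquiv.piFinSuccAbove (fun _ : Fin (m+1) => ℝ) 0).symm (x, y)))
            ∂(Measure.pi fun _ => volume)
        ≤ ∫⁻ y : Fin m → ℝ, G y ∂(Measure.pi fun _ => volume) := by
          apply lintegral_mono
          intro y
          calc (∫⁻ x : ℝ, (simplexSet (m+1)).indicator f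
                ((MeasurableEquiv.piFinSuccAbove (fun _ : Fin (m+1) => ℝ) 0).symm (x, y)))
              = ∫⁻ x : ℝ, (simplexSet (m+1)).indicator f (Fin.cons x y) := by
                simp_rw [hesymm]
            _ ≤ G y := inner_bound y
      _ < ⊤ := by rw [← MeasureTheory.volume_pi]; exact hGfin


lemma regroup_aux (u : ℕ → ℝ) (a : ℕ → ℝ) (P : ℝ) (hu : ∀ k, 0 < u k)
    (ha0 : a 0 = P) (hstep : ∀ k, a (k+1) + (1 - a k) = P) :
    ∀ t : ℕ, (∏ k ∈ Finset.range (t+1), u k ^ (-(a k))) *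
      (∏ k ∈ Finset.range t, u (k+1) ^ (-(1 - a k))) =
      ∏ k ∈ Finset.range (t+1), u k ^ (-P) := by
  intro t
  induction t with
  | zero => simp [ha0]
  | succ t IH =>
    rw [Finset.prod_range_succ (fun k => u k ^ (-(a k))) (t+1),
        Finset.prod_range_succ (fun k => u (k+1) ^ (-(1 - a k))) t,
        Finset.prod_range_succ (fun k => u k ^ (-P)) (t+1),
        mul_mul_mul_comm, IH]
    congr 1
    rw [← Real.rpow_add (hu (t+1))]
    congr 1
    have := hstep t
    linarith


lemma measurable_discδ (n : ℕ) (i : ℕ) : Measurable (fun δ : Fin (n-3) → ℝ => discδ n δ i) := by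
  unfold discδ
  split_ifs with h1 h2
  · exact measurable_const
  · exact measurable_const.sub (Finset.measurable_sum _ fun j _ => measurable_pi_apply j)
  · exact measurable_pi_apply _

lemma pointwise_bound (n : ℕ) (hn : 4 ≤ n) (δ : Fin (n-3) → ℝ)
    (hpos : ∀ i, 0 < δ i) (hsum : ∑ i, δ i < 1) :
    |∏ i ∈ Finset.Icc 2 (n-2), (discδ n δ i + discδ n δ (i + 1))⁻¹| ≤
      (∏ k, δ k ^ (-(1 - 1/(2*((n-3 : ℕ) : ℝ))))) * (1 - ∑ k, δ k) ^ (-(1/2 : ℝ)) := by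
  have hm : 0 < n - 3 := by omega
  have hm3 : ¬ (n - 3 = 0) := by omega
  have hM1 : (1:ℝ) ≤ ((n - 3 : ℕ) : ℝ) := by exact_mod_cast hm
  set M : ℝ := ((n - 3 : ℕ) : ℝ) with hM
  have hMpos : (0:ℝ) < M := by linarith
  have hslackpos : 0 < 1 - ∑ k, δ k := by linarith
  set slack : ℝ := 1 - ∑ k, δ k with hslack
  set g : ℕ → ℝ := fun k => δ ⟨k % (n-3), Nat.mod_lt _ hm⟩ with hg
  have hgpos : ∀ k, 0 < g k := fun k => hpos _
  set a : ℕ → ℝ := fun k => 1 - ((k:ℝ)+1)/(2*M) with ha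
  set P : ℝ := 1 - 1/(2*M) with hPdef
  -- discδ evaluations
  have hd1 : ∀ i : ℕ, i ≠ n - 1 → discδ n δ i = g (i - 2) := by
    intro i hi
    rw [discδ, dif_neg hm3, if_neg hi]
  have hd2 : discδ n δ (n-1) = slack := by
    rw [discδ, dif_neg hm3, if_pos rfl]
  -- rewrite the product over Icc to a product over range
  have hIcc : Finset.Icc 2 (n-2) = Finset.Ico 2 ((n-3)+2) := by
    have h1 : (n-3)+2 = (n-2)+1 := by omega
    rw [h1, Finset.Ico_add_one_right_eq_Icc]
  rw [hIcc, Finset.prod_Ico_eq_prod_range]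
  have hmm : (n-3)+2-2 = n-3 := by omega
  rw [hmm]
  -- evaluate the factors
  have hfac : ∀ k ∈ Finset.range (n-3), (discδ n δ (2+k) + discδ n δ (2+k+1))⁻¹ =
      (g k + (if k = (n-3) - 1 then slack else g (k+1)))⁻¹ := by
    intro k hk
    have hk' : k < n-3 := Finset.mem_range.mp hk
    have h1 : discδ n δ (2+k) = g k := by
      rw [hd1 (2+k) (by omega)]
      congr 1
      omega
    have h2 : discδ n δ (2+k+1) = if k = (n-3) - 1 then slack else g (k+1) := by
      by_cases hk2 : k = (n-3) - 1
      · rw [if_pos hk2]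
        have h3 : 2+k+1 = n-1 := by omega
        rw [h3, hd2]
      · rw [if_neg hk2, hd1 (2+k+1) (by omega)]
        congr 1
        omega
    rw [h1, h2]
  rw [Finset.prod_congr rfl hfac]
  have hnx : ∀ k, 0 < (if k = (n-3) - 1 then slack else g (k+1)) := by
    intro k
    split
    · exact hslackpos
    · exact hgpos _
  rw [abs_of_nonneg (Finset.prod_nonneg fun k _ =>
    inv_nonneg.mpr (add_pos (hgpos k) (hnx k)).le)]
  -- AM-GM bound on each factor
  have hbound : ∀ k ∈ Finset.range (n-3),
      (g k + (if k = (n-3) - 1 then slack else g (k+1)))⁻¹ ≤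
      g k ^ (-(a k)) * (if k = (n-3) - 1 then slack else g (k+1)) ^ (-(1 - a k)) := by
    intro k hk
    have hk' : k < n-3 := Finset.mem_range.mp hk
    apply amgm_inv (hgpos k) (hnx k)
    · have hkm : ((k:ℝ)+1) ≤ M := by
        rw [hM]; exact_mod_cast hk'
      have h5 : ((k:ℝ)+1)/(2*M) ≤ 1/2 := by
        rw [div_le_div_iff₀ (by linarith) (by norm_num)]
        linarith
      rw [ha]; simp only []
      linarith
    · have h6 : 0 < ((k:ℝ)+1)/(2*M) := by positivity
      rw [ha]; simp only []
      linarith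
  refine le_trans (Finset.prod_le_prod (fun k _ =>
    inv_nonneg.mpr (add_pos (hgpos k) (hnx k)).le) hbound) ?_
  -- regroup
  obtain ⟨t, ht⟩ : ∃ t, n - 3 = t + 1 := ⟨(n-3) - 1, by omega⟩
  have htm : (n-3) - 1 = t := by omega
  have hsplit : (∏ k ∈ Finset.range (n-3),
      (g k ^ (-(a k)) * (if k = (n-3) - 1 then slack else g (k+1)) ^ (-(1 - a k))))
      = ((∏ k ∈ Finset.range (n-3), g k ^ (-(a k))) *
        (∏ k ∈ Finset.range t, g (k+1) ^ (-(1 - a k)))) * slack ^ (-(1 - a t)) := by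
    rw [Finset.prod_mul_distrib]
    rw [mul_assoc]
    congr 1
    rw [ht, Finset.prod_range_succ]
    congr 1
    · apply Finset.prod_congr rfl
      intro k hk
      rw [if_neg (by have := Finset.mem_range.mp hk; omega)]
    · rw [if_pos (by omega : t = t + 1 - 1)]
  have ha0 : a 0 = P := by simp only [ha, hPdef]; norm_num
  have hstep : ∀ k : ℕ, a (k+1) + (1 - a k) = P := by
    intro k
    simp only [ha, hPdef]
    push_cast
    have h7 : M ≠ 0 := hMpos.ne'
    field_simp
    ring
  have hat : 1 - a t = (1/2 : ℝ) := by
    have hMt : M = (t:ℝ) + 1 := by rw [hM, ht]; push_cast; ring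
    have h8 : (t:ℝ) + 1 ≠ 0 := by positivity
    simp only [ha, hMt]
    field_simp
    ring
  have hregroup := regroup_aux g a P hgpos ha0 hstep t
  rw [← ht] at hregroup
  rw [hsplit, hregroup, hat]
  apply le_of_eq
  congr 1
  rw [← Fin.prod_univ_eq_prod_range (fun k => g k ^ (-P)) (n-3)]
  apply Finset.prod_congr rfl
  intro i _
  congr 1
  show δ ⟨(i:ℕ) % (n-3), _⟩ = δ i
  congr 1
  ext
  simp [Nat.mod_eq_of_lt i.isLt]


end Stmt13Aux

/-- The integrand of the disc volume `V_disc(n)` is Lebesgue-integrable over the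
open simplex `{δ ∈ (0,∞)^{n-3} : δ_2 + ⋯ + δ_{n-2} < 1}`; in particular the
disc volume is finite. -/
theorem stmt_13 (n : ℕ) (hn : 4 ≤ n) :
    IntegrableOn
      (fun δ : Fin (n - 3) → ℝ =>
        ∏ i ∈ Finset.Icc 2 (n - 2), (discδ n δ i + discδ n δ (i + 1))⁻¹)
      {δ : Fin (n - 3) → ℝ | (∀ i, 0 < δ i) ∧ ∑ i, δ i < 1} := by
  have hm : 0 < n - 3 := by omega
  have hM1 : (1:ℝ) ≤ ((n - 3 : ℕ) : ℝ) := by exact_mod_cast hm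
  have hSet : {δ : Fin (n - 3) → ℝ | (∀ i, 0 < δ i) ∧ ∑ i, δ i < 1} =
      Stmt13Aux.simplexSet (n - 3) := rfl
  rw [hSet]
  have hfmeas : Measurable (fun δ : Fin (n - 3) → ℝ =>
      ∏ i ∈ Finset.Icc 2 (n - 2), (discδ n δ i + discδ n δ (i + 1))⁻¹) :=
    Finset.measurable_prod _ fun i _ =>
      ((Stmt13Aux.measurable_discδ n i).add (Stmt13Aux.measurable_discδ n (i + 1))).inv
  refine ⟨hfmeas.aestronglyMeasurable, ?_⟩
  rw [hasFiniteIntegral_iff_norm]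
  have hp0 : (0:ℝ) ≤ 1 - 1/(2*((n - 3 : ℕ) : ℝ)) := by
    have h2 : (2:ℝ) ≤ 2*((n - 3 : ℕ) : ℝ) := by linarith
    have h3 : 1/(2*((n - 3 : ℕ) : ℝ)) ≤ 1/2 :=
      one_div_le_one_div_of_le (by norm_num) h2
    linarith
  have hp1 : (1 - 1/(2*((n - 3 : ℕ) : ℝ)) : ℝ) < 1 := by
    have h4 : (0:ℝ) < 1/(2*((n - 3 : ℕ) : ℝ)) := div_pos one_pos (by linarith)
    linarith
  calc ∫⁻ δ in Stmt13Aux.simplexSet (n - 3),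
        ENNReal.ofReal ‖∏ i ∈ Finset.Icc 2 (n - 2), (discδ n δ i + discδ n δ (i + 1))⁻¹‖
      ≤ ∫⁻ δ in Stmt13Aux.simplexSet (n - 3),
          ENNReal.ofReal ((∏ k, δ k ^ (-(1 - 1/(2*((n - 3 : ℕ) : ℝ))))) *
            (1 - ∑ k, δ k) ^ (-(1/2 : ℝ))) := by
        apply setLIntegral_mono (by fun_prop)
        intro δ hδ
        apply ENNReal.ofReal_le_ofReal
        rw [Real.norm_eq_abs]
        exact Stmt13Aux.pointwise_bound n hn δ hδ.1 hδ.2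
    _ < ⊤ := Stmt13Aux.dirichlet (n - 3) (fun _ => 1 - 1/(2*((n - 3 : ℕ) : ℝ))) (1/2)
        (fun _ => hp0) (fun _ => hp1) (by norm_num)
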